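/- Let F ⊂ L₂(μ), T ∈ L₂(μ), D = sup_{f∈F} ‖T − f‖, ρ = ‖T − f*‖ where f* minimizes ‖f − T‖ over F, and T_λ = (1−λ)T + λf* for 0 ≤ λ ≤ 1/2. Then there exists an absolute constant c > 0 such that for any f ∈ F and r > 0: if r/λ ≤ c (ρ/D) ‖f − f*‖², then E𝓛_λ(f) ≥ r, where 𝓛_λ(f) = (f − T_λ)² − (f* − T_λ)². -/

import Mathlib

open MeasureTheory

/-- with `D = sup_{f∈F} ‖T-f‖`, `ρ = ‖T-f*‖`, `f*` a minimizer of
`‖f-T‖` over `F` and `0 ≤ λ ≤ 1/2`, there is an absolute constant `c > 0` such that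
for `f ∈ F` and `r > 0`, if `r ≤ λ · c (ρ/D) ‖f-f*‖²` then `E𝓛_λ(f) ≥ r`.
(The norm is the `L₂(μ)` norm, `‖g‖² = ∫ g² dμ`.) -/
theorem stmt_7 :
    ∃ c : ℝ, 0 < c ∧
      ∀ (Ω : Type) [MeasurableSpace Ω] (μ : Measure Ω) [IsProbabilityMeasure μ]
        (F : Set (Ω → ℝ)) (T fstar : Ω → ℝ),
        MemLp T 2 μ → MemLp fstar 2 μ → (∀ g ∈ F, MemLp g 2 μ) →
        fstar ∈ F →
        (∀ g ∈ F, ∫ ω, (fstar ω - T ω) ^ 2 ∂μ ≤ ∫ ω, (g ω - T ω) ^ 2 ∂μ) →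
        ∀ D ρ : ℝ,
        D = sSup ((fun g => Real.sqrt (∫ ω, (T ω - g ω) ^ 2 ∂μ)) '' F) →
        ρ = Real.sqrt (∫ ω, (T ω - fstar ω) ^ 2 ∂μ) →
        ∀ (l : ℝ), 0 ≤ l → l ≤ 1 / 2 →
        ∀ f ∈ F, ∀ r : ℝ, 0 < r →
        r ≤ l * (c * (ρ / D) * ∫ ω, (f ω - fstar ω) ^ 2 ∂μ) →
        r ≤ ∫ ω, ((f ω - ((1 - l) * T ω + l * fstar ω)) ^ 2
              - (fstar ω - ((1 - l) * T ω + l * fstar ω)) ^ 2) ∂μ := by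
  refine ⟨1, one_pos, ?_⟩
  intro Ω _ μ _ F T fstar hT hfs hF hfsF hmin D ρ hD hρ l hl0 hl2 f hf r hr hrle
  have hfT : Integrable (fun ω => (f ω - T ω) ^ 2) μ := ((hF f hf).sub hT).integrable_sq
  have hsT : Integrable (fun ω => (fstar ω - T ω) ^ 2) μ := (hfs.sub hT).integrable_sq
  have hff : Integrable (fun ω => (f ω - fstar ω) ^ 2) μ := ((hF f hf).sub hfs).integrable_sq
  have heq : (∫ ω, ((f ω - ((1 - l) * T ω + l * fstar ω)) ^ 2
              - (fstar ω - ((1 - l) * T ω + l * fstar ω)) ^ 2) ∂μ)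
      = (1 - l) * ((∫ ω, (f ω - T ω) ^ 2 ∂μ) - ∫ ω, (fstar ω - T ω) ^ 2 ∂μ)
        + l * ∫ ω, (f ω - fstar ω) ^ 2 ∂μ := by
    have h1 : Integrable (fun ω => (1 - l) * ((f ω - T ω) ^ 2 - (fstar ω - T ω) ^ 2)) μ := by
      simpa [Pi.sub_apply] using (hfT.sub hsT).const_mul (1 - l)
    have h2 : Integrable (fun ω => l * (f ω - fstar ω) ^ 2) μ := hff.const_mul l
    calc ∫ ω, ((f ω - ((1 - l) * T ω + l * fstar ω)) ^ 2
              - (fstar ω - ((1 - l) * T ω + l * fstar ω)) ^ 2) ∂μ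
        = ∫ ω, ((1 - l) * ((f ω - T ω) ^ 2 - (fstar ω - T ω) ^ 2)
              + l * (f ω - fstar ω) ^ 2) ∂μ :=
          integral_congr_ae (Filter.Eventually.of_forall fun ω => by ring)
      _ = (∫ ω, (1 - l) * ((f ω - T ω) ^ 2 - (fstar ω - T ω) ^ 2) ∂μ)
            + ∫ ω, l * (f ω - fstar ω) ^ 2 ∂μ := integral_add h1 h2
      _ = (1 - l) * (∫ ω, ((f ω - T ω) ^ 2 - (fstar ω - T ω) ^ 2) ∂μ)
            + l * ∫ ω, (f ω - fstar ω) ^ 2 ∂μ := by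
          rw [integral_const_mul, integral_const_mul]
      _ = (1 - l) * ((∫ ω, (f ω - T ω) ^ 2 ∂μ) - ∫ ω, (fstar ω - T ω) ^ 2 ∂μ)
            + l * ∫ ω, (f ω - fstar ω) ^ 2 ∂μ := by rw [integral_sub hfT hsT]
  have hAB : (∫ ω, (fstar ω - T ω) ^ 2 ∂μ) ≤ ∫ ω, (f ω - T ω) ^ 2 ∂μ := hmin f hf
  have hC0 : 0 ≤ ∫ ω, (f ω - fstar ω) ^ 2 ∂μ := integral_nonneg fun ω => sq_nonneg _
  have hρ0 : 0 ≤ ρ := hρ ▸ Real.sqrt_nonneg _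
  -- ρ/D ≤ 1, or else the hypothesis is contradictory
  have hratio : ρ / D ≤ 1 := by
    rcases eq_or_ne D 0 with h0 | h0
    · exfalso
      rw [h0, div_zero] at hrle
      nlinarith
    · have hbdd : BddAbove ((fun g => Real.sqrt (∫ ω, (T ω - g ω) ^ 2 ∂μ)) '' F) := by
        by_contra hb
        exact h0 (hD.trans (Real.sSup_of_not_bddAbove hb))
      have hρD : ρ ≤ D := by
        rw [hD, hρ]
        exact le_csSup hbdd ⟨fstar, hfsF, rfl⟩
      have hDpos : 0 < D := lt_of_le_of_ne (hρ0.trans hρD) (Ne.symm h0)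
      exact div_le_one_of_le₀ hρD hDpos.le
  have hrC : r ≤ l * ∫ ω, (f ω - fstar ω) ^ 2 ∂μ := by
    have := mul_le_mul_of_nonneg_left
      (mul_le_mul_of_nonneg_right hratio hC0) hl0
    nlinarith
  rw [heq]
  nlinarith
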